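/- Let k(t,s)=𝔎(t−s), where 𝔎:(0,∞)→ℝ is continuous and satisfies |𝔎(t)|≤M t^{β−1} e^{γt} for all t>0, for some constants M,γ≥0 and β∈(0,1]. Then for every n∈ℕ and every σ>γ, the Laplace transform of c_n satisfies ∫_0^∞ e^{−σt} c_n(t) dt = (1/σ)·[(ℒ𝔎)(σ)]^n, and for every λ≥0 and every σ > γ + (MΓ(β)λ)^{1/β}, the Laplace transform of Φ(·,−λ) exists and equals ∫_0^∞ e^{−σt} Φ(t,−λ) dt = (1/σ)·1/(1+λ(ℒ𝔎)(σ)). -/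

import Mathlib

open MeasureTheory Filter

noncomputable section

noncomputable def coeff (k : ℝ → ℝ → ℝ) : ℕ → ℝ → ℝ
  | 0, _ => 1
  | n + 1, t => if 0 < t then ∫ s in Set.Ioc (0:ℝ) t, k t s * coeff k n s else 0

noncomputable def Phi (k : ℝ → ℝ → ℝ) (t : ℝ) (l : ℂ) : ℂ :=
  ∑' n : ℕ, (coeff k n t : ℂ) * l ^ n

noncomputable def PhiR (k : ℝ → ℝ → ℝ) (t : ℝ) (x : ℝ) : ℝ :=
  ∑' n : ℕ, coeff k n t * x ^ n

open Set Real

namespace Stmt15Aux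

/-- the guarded Laplace integrand of `K` -/
def fA (K : ℝ → ℝ) (σ : ℝ) (t : ℝ) : ℝ := if 0 < t then Real.exp (-(σ * t)) * K t else 0

/-- the guarded Laplace integrand of `coeff k n` -/
def gA (k : ℝ → ℝ → ℝ) (σ : ℝ) (n : ℕ) (t : ℝ) : ℝ :=
  if 0 < t then Real.exp (-(σ * t)) * coeff k n t else 0

variable {K : ℝ → ℝ} {M γ β σ : ℝ} {k : ℝ → ℝ → ℝ}

lemma fA_eq_indicator :
    fA K σ = (Ioi (0:ℝ)).indicator (fun t => Real.exp (-(σ * t)) * K t) := by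
  funext t; simp [fA, Set.indicator_apply, Set.mem_Ioi]

lemma gA_eq_indicator (n : ℕ) :
    gA k σ n = (Ioi (0:ℝ)).indicator (fun t => Real.exp (-(σ * t)) * coeff k n t) := by
  funext t; simp [gA, Set.indicator_apply, Set.mem_Ioi]

lemma dom_integrable (hM : 0 ≤ M) (hβ0 : 0 < β) (hσ : γ < σ) :
    Integrable ((Ioi (0:ℝ)).indicator
      (fun t => M * (t ^ (β - 1) * Real.exp (-((σ - γ) * t))))) := by
  rw [integrable_indicator_iff measurableSet_Ioi]
  have h := integrableOn_rpow_mul_exp_neg_mul_rpow (p := 1) (s := β - 1) (b := σ - γ)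
    (by linarith) one_pos (by linarith)
  have h' : IntegrableOn (fun x : ℝ => x ^ (β - 1) * Real.exp (-((σ - γ) * x))) (Ioi 0) := by
    refine h.congr_fun (fun x _ => ?_) measurableSet_Ioi
    simp only [Real.rpow_one, neg_mul]
  exact h'.const_mul M

lemma fA_aesm (hKc : ContinuousOn K (Set.Ioi 0)) :
    AEStronglyMeasurable (fA K σ) (volume : Measure ℝ) := by
  rw [fA_eq_indicator]
  rw [aestronglyMeasurable_indicator_iff measurableSet_Ioi]
  exact (((Real.continuous_exp.comp (continuous_const.mul continuous_id).neg).continuousOn).mul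
    hKc).aestronglyMeasurable measurableSet_Ioi

lemma fA_bound (hKb : ∀ t : ℝ, 0 < t → |K t| ≤ M * t ^ (β - 1) * Real.exp (γ * t)) (t : ℝ) :
    ‖fA K σ t‖ ≤ (Ioi (0:ℝ)).indicator
      (fun t => M * (t ^ (β - 1) * Real.exp (-((σ - γ) * t)))) t := by
  by_cases ht : 0 < t
  · have hexp : Real.exp (-(σ * t)) * Real.exp (γ * t) = Real.exp (-((σ - γ) * t)) := by
      rw [← Real.exp_add]; ring_nf
    have : ‖fA K σ t‖ = Real.exp (-(σ * t)) * |K t| := by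
      rw [fA, if_pos ht, Real.norm_eq_abs, abs_mul, abs_of_pos (Real.exp_pos _)]
    rw [this, Set.indicator_of_mem (Set.mem_Ioi.mpr ht)]
    calc Real.exp (-(σ * t)) * |K t|
        ≤ Real.exp (-(σ * t)) * (M * t ^ (β - 1) * Real.exp (γ * t)) := by
          exact mul_le_mul_of_nonneg_left (hKb t ht) (Real.exp_pos _).le
      _ = M * (t ^ (β - 1) * Real.exp (-((σ - γ) * t))) := by rw [← hexp]; ring
  · rw [fA, if_neg ht, Set.indicator_of_notMem (by simpa [Set.mem_Ioi] using ht)]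
    simp

lemma fA_integrable (hKc : ContinuousOn K (Set.Ioi 0)) (hM : 0 ≤ M) (hβ0 : 0 < β)
    (hKb : ∀ t : ℝ, 0 < t → |K t| ≤ M * t ^ (β - 1) * Real.exp (γ * t))
    (hσ : γ < σ) : Integrable (fA K σ) := by
  exact (dom_integrable hM hβ0 hσ).mono' (fA_aesm hKc) (Filter.Eventually.of_forall (fA_bound hKb))

lemma fA_norm_integral_le (hKc : ContinuousOn K (Set.Ioi 0)) (hM : 0 ≤ M) (hβ0 : 0 < β)
    (hKb : ∀ t : ℝ, 0 < t → |K t| ≤ M * t ^ (β - 1) * Real.exp (γ * t))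
    (hσ : γ < σ) :
    (∫ t, ‖fA K σ t‖) ≤ M * Real.Gamma β * (σ - γ) ^ (-β) := by
  have hpos : 0 < σ - γ := by linarith
  have h1 : (∫ t, ‖fA K σ t‖) ≤ ∫ t, (Ioi (0:ℝ)).indicator
      (fun t => M * (t ^ (β - 1) * Real.exp (-((σ - γ) * t)))) t :=
    integral_mono (fA_integrable hKc hM hβ0 hKb hσ).norm (dom_integrable hM hβ0 hσ)
      (fA_bound hKb)
  have h2 : (∫ t, (Ioi (0:ℝ)).indicator
      (fun t => M * (t ^ (β - 1) * Real.exp (-((σ - γ) * t)))) t)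
      = M * ((1 / (σ - γ)) ^ β * Real.Gamma β) := by
    rw [integral_indicator measurableSet_Ioi, integral_const_mul,
      integral_rpow_mul_exp_neg_mul_Ioi hβ0 hpos]
  have h3 : (1 / (σ - γ)) ^ β = (σ - γ) ^ (-β) := by
    rw [one_div, Real.rpow_neg hpos.le, ← Real.inv_rpow hpos.le]
  rw [h2, h3] at h1
  calc (∫ t, ‖fA K σ t‖) ≤ M * ((σ - γ) ^ (-β) * Real.Gamma β) := h1
    _ = M * Real.Gamma β * (σ - γ) ^ (-β) := by ring

open scoped Convolution

lemma gA_zero_eq : gA k σ 0 = (Ioi (0:ℝ)).indicator (fun t => Real.exp (-(σ * t))) := by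
  funext t; simp [gA, coeff, Set.indicator_apply, Set.mem_Ioi]

lemma key (hKc : ContinuousOn K (Set.Ioi 0)) (hM : 0 ≤ M) (hβ0 : 0 < β)
    (hKb : ∀ t : ℝ, 0 < t → |K t| ≤ M * t ^ (β - 1) * Real.exp (γ * t))
    (hk : ∀ t s, k t s = K (t - s)) (hσ : γ < σ) (hσ0 : 0 < σ) :
    ∀ n : ℕ, Integrable (gA k σ n) ∧
      (∫ t, gA k σ n t) = (1 / σ) * (∫ t, fA K σ t) ^ n ∧
      (∫ t, ‖gA k σ n t‖) ≤ (1 / σ) * (∫ t, ‖fA K σ t‖) ^ n := by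
  have hfi : Integrable (fA K σ) := fA_integrable hKc hM hβ0 hKb hσ
  have hexp0 : (∫ t in Ioi (0:ℝ), Real.exp (-(σ * t))) = 1 / σ := by
    have := integral_rpow_mul_exp_neg_mul_Ioi (a := 1) one_pos hσ0
    simpa using this
  have hexpint : IntegrableOn (fun t : ℝ => Real.exp (-(σ * t))) (Ioi 0) := by
    have := exp_neg_integrableOn_Ioi 0 hσ0
    refine this.congr_fun (fun x _ => ?_) measurableSet_Ioi
    simp only [neg_mul]
  intro n
  induction n with
  | zero =>
    have hind := gA_zero_eq (k := k) (σ := σ)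
    constructor
    · rw [hind, integrable_indicator_iff measurableSet_Ioi]; exact hexpint
    constructor
    · rw [hind, integral_indicator measurableSet_Ioi, hexp0, pow_zero, mul_one]
    · have : (fun t => ‖gA k σ 0 t‖) = (Ioi (0:ℝ)).indicator (fun t => Real.exp (-(σ * t))) := by
        funext t
        rw [hind, norm_indicator_eq_indicator_norm]
        congr 1
        funext x
        rw [Real.norm_eq_abs, Real.abs_exp]
      rw [this, integral_indicator measurableSet_Ioi, hexp0, pow_zero, mul_one]
  | succ n ih =>
    obtain ⟨ih1, ih2, ih3⟩ := ih
    have hconv : gA k σ (n + 1) = (gA k σ n) ⋆[ContinuousLinearMap.mul ℝ ℝ] (fA K σ) := by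
      funext t
      rw [convolution_def]
      simp only [ContinuousLinearMap.mul_apply']
      by_cases ht : 0 < t
      · have heq : (fun s => gA k σ n s * fA K σ (t - s)) =
            (Ioo (0:ℝ) t).indicator (fun s => Real.exp (-(σ * t)) * (k t s * coeff k n s)) := by
          funext s
          by_cases hs1 : 0 < s
          · by_cases hs2 : s < t
            · rw [Set.indicator_of_mem (Set.mem_Ioo.mpr ⟨hs1, hs2⟩)]
              have hts : 0 < t - s := by linarith
              rw [gA, if_pos hs1, fA, if_pos hts, hk t s]
              have hee : Real.exp (-(σ * s)) * Real.exp (-(σ * (t - s))) =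
                  Real.exp (-(σ * t)) := by rw [← Real.exp_add]; ring_nf
              calc Real.exp (-(σ * s)) * coeff k n s * (Real.exp (-(σ * (t - s))) * K (t - s))
                  = Real.exp (-(σ * s)) * Real.exp (-(σ * (t - s))) * (K (t - s) * coeff k n s) := by
                    ring
                _ = Real.exp (-(σ * t)) * (K (t - s) * coeff k n s) := by rw [hee]
            · rw [Set.indicator_of_notMem (by simp [Set.mem_Ioo, hs2])]
              have : ¬ (0 < t - s) := by linarith
              rw [fA, if_neg this, mul_zero]
          · rw [Set.indicator_of_notMem (by simp [Set.mem_Ioo, hs1])]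
            rw [gA, if_neg hs1, zero_mul]
        rw [heq, integral_indicator measurableSet_Ioo, integral_const_mul,
          ← integral_Ioc_eq_integral_Ioo]
        rw [gA, if_pos ht]
        congr 1
        rw [coeff, if_pos ht]
      · have heq : ∀ s : ℝ, gA k σ n s * fA K σ (t - s) = 0 := by
          intro s
          by_cases hs : 0 < s
          · have : ¬ (0 < t - s) := by linarith
            rw [fA, if_neg this, mul_zero]
          · rw [gA, if_neg hs, zero_mul]
        rw [gA, if_neg ht, show (fun s => gA k σ n s * fA K σ (t - s)) = fun _ => (0:ℝ) from
          funext heq, integral_zero]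
    have hint : Integrable ((gA k σ n) ⋆[ContinuousLinearMap.mul ℝ ℝ] (fA K σ)) :=
      ih1.integrable_convolution (ContinuousLinearMap.mul ℝ ℝ) hfi
    have hval := integral_convolution (ContinuousLinearMap.mul ℝ ℝ) ih1 hfi
    simp only [ContinuousLinearMap.mul_apply'] at hval
    refine ⟨hconv ▸ hint, ?_, ?_⟩
    · rw [hconv, hval, ih2, pow_succ]; ring
    · have hconv'int : Integrable ((fun t => ‖gA k σ n t‖) ⋆[ContinuousLinearMap.mul ℝ ℝ]
          (fun t => ‖fA K σ t‖)) :=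
        ih1.norm.integrable_convolution (ContinuousLinearMap.mul ℝ ℝ) hfi.norm
      have hle : ∀ t, ‖gA k σ (n + 1) t‖ ≤
          ((fun t => ‖gA k σ n t‖) ⋆[ContinuousLinearMap.mul ℝ ℝ] (fun t => ‖fA K σ t‖)) t := by
        intro t
        rw [hconv, convolution_def, convolution_def]
        simp only [ContinuousLinearMap.mul_apply']
        calc ‖∫ s, gA k σ n s * fA K σ (t - s)‖
            ≤ ∫ s, ‖gA k σ n s * fA K σ (t - s)‖ := norm_integral_le_integral_norm _
          _ = ∫ s, ‖gA k σ n s‖ * ‖fA K σ (t - s)‖ := by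
              congr 1; funext s; rw [norm_mul]
      have hmono : (∫ t, ‖gA k σ (n + 1) t‖) ≤
          ∫ t, ((fun t => ‖gA k σ n t‖) ⋆[ContinuousLinearMap.mul ℝ ℝ] (fun t => ‖fA K σ t‖)) t :=
        integral_mono (hconv ▸ hint).norm hconv'int hle
      have hval' := integral_convolution (ContinuousLinearMap.mul ℝ ℝ) ih1.norm hfi.norm
      simp only [ContinuousLinearMap.mul_apply'] at hval'
      rw [hval'] at hmono
      calc (∫ t, ‖gA k σ (n + 1) t‖)
          ≤ (∫ t, ‖gA k σ n t‖) * ∫ t, ‖fA K σ t‖ := hmono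
        _ ≤ (1 / σ) * (∫ t, ‖fA K σ t‖) ^ n * ∫ t, ‖fA K σ t‖ :=
            mul_le_mul_of_nonneg_right ih3 (integral_nonneg fun t => norm_nonneg _)
        _ = (1 / σ) * (∫ t, ‖fA K σ t‖) ^ (n + 1) := by rw [pow_succ]; ring

end Stmt15Aux

theorem stmt15 (K : ℝ → ℝ) (hKc : ContinuousOn K (Set.Ioi 0))
    (M γ β : ℝ) (hM : 0 ≤ M) (hγ : 0 ≤ γ) (hβ0 : 0 < β) (hβ1 : β ≤ 1)
    (hKb : ∀ t : ℝ, 0 < t → |K t| ≤ M * t ^ (β - 1) * Real.exp (γ * t))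
    (k : ℝ → ℝ → ℝ) (hk : ∀ t s, k t s = K (t - s)) :
    (∀ n : ℕ, ∀ σ : ℝ, γ < σ →
      MeasureTheory.IntegrableOn (fun t => Real.exp (-(σ * t)) * coeff k n t) (Set.Ioi 0) ∧
      (∫ t in Set.Ioi (0:ℝ), Real.exp (-(σ * t)) * coeff k n t) =
        (1 / σ) * (∫ t in Set.Ioi (0:ℝ), Real.exp (-(σ * t)) * K t) ^ n) ∧
    (∀ l : ℝ, 0 ≤ l → ∀ σ : ℝ, γ + (M * Real.Gamma β * l) ^ (1 / β) < σ →
      MeasureTheory.IntegrableOn (fun t => Real.exp (-(σ * t)) * PhiR k t (-l)) (Set.Ioi 0) ∧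
      (∫ t in Set.Ioi (0:ℝ), Real.exp (-(σ * t)) * PhiR k t (-l)) =
        (1 / σ) * (1 / (1 + l * ∫ t in Set.Ioi (0:ℝ), Real.exp (-(σ * t)) * K t))) := by
  classical
  have hΓ : 0 < Real.Gamma β := Real.Gamma_pos_of_pos hβ0
  have part1 : ∀ n : ℕ, ∀ σ : ℝ, γ < σ →
      MeasureTheory.IntegrableOn (fun t => Real.exp (-(σ * t)) * coeff k n t) (Set.Ioi 0) ∧
      (∫ t in Set.Ioi (0:ℝ), Real.exp (-(σ * t)) * coeff k n t) =
        (1 / σ) * (∫ t in Set.Ioi (0:ℝ), Real.exp (-(σ * t)) * K t) ^ n := by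
    intro n σ hσ
    have hσ0 : 0 < σ := lt_of_le_of_lt hγ hσ
    obtain ⟨h1, h2, _⟩ := Stmt15Aux.key hKc hM hβ0 hKb hk hσ hσ0 n
    have heqOn : Set.EqOn (fun t => Real.exp (-(σ * t)) * coeff k n t)
        (Stmt15Aux.gA k σ n) (Set.Ioi 0) := by
      intro t ht
      simp [Stmt15Aux.gA, Set.mem_Ioi.mp ht]
    have efa : (∫ t, Stmt15Aux.fA K σ t) = ∫ t in Set.Ioi (0:ℝ), Real.exp (-(σ * t)) * K t := by
      rw [Stmt15Aux.fA_eq_indicator, integral_indicator measurableSet_Ioi]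
    have ega : (∫ t, Stmt15Aux.gA k σ n t) =
        ∫ t in Set.Ioi (0:ℝ), Real.exp (-(σ * t)) * coeff k n t := by
      rw [Stmt15Aux.gA_eq_indicator, integral_indicator measurableSet_Ioi]
    refine ⟨h1.integrableOn.congr_fun heqOn.symm measurableSet_Ioi, ?_⟩
    rw [← ega, h2, efa]
  refine ⟨part1, ?_⟩
  intro l hl σ hσ'
  have hr0 : 0 ≤ (M * Real.Gamma β * l) ^ (1 / β) := Real.rpow_nonneg (by positivity) _
  have hσγ : γ < σ := by linarith
  have hσ0 : 0 < σ := lt_of_le_of_lt hγ hσγ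
  have hpos : 0 < σ - γ := by linarith
  have hMl : M * Real.Gamma β * l < (σ - γ) ^ β := by
    have h1 : (M * Real.Gamma β * l) ^ (1 / β) < σ - γ := by linarith
    have h2 := Real.rpow_lt_rpow hr0 h1 hβ0
    rwa [← Real.rpow_mul (by positivity), one_div, inv_mul_cancel₀ (ne_of_gt hβ0),
      Real.rpow_one] at h2
  have hNa_le := Stmt15Aux.fA_norm_integral_le hKc hM hβ0 hKb hσγ
  set Na := ∫ t, ‖Stmt15Aux.fA K σ t‖ with hNadef
  have hNa0 : 0 ≤ Na := integral_nonneg fun t => norm_nonneg _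
  have hq : l * Na < 1 := by
    have hb : 0 < (σ - γ) ^ (-β) := Real.rpow_pos_of_pos hpos _
    have h1 : l * Na ≤ (M * Real.Gamma β * l) * (σ - γ) ^ (-β) := by
      calc l * Na ≤ l * (M * Real.Gamma β * (σ - γ) ^ (-β)) :=
            mul_le_mul_of_nonneg_left hNa_le hl
        _ = (M * Real.Gamma β * l) * (σ - γ) ^ (-β) := by ring
    have h2 : (M * Real.Gamma β * l) * (σ - γ) ^ (-β) < (σ - γ) ^ β * (σ - γ) ^ (-β) :=
      mul_lt_mul_of_pos_right hMl hb
    have h3 : (σ - γ) ^ β * (σ - γ) ^ (-β) = 1 := by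
      rw [← Real.rpow_add hpos]; simp
    linarith
  have hq0 : 0 ≤ l * Na := mul_nonneg hl hNa0
  have hkey := Stmt15Aux.key hKc hM hβ0 hKb hk hσγ hσ0
  set F : ℕ → ℝ → ℝ := fun n t => Real.exp (-(σ * t)) * (coeff k n t * (-l) ^ n) with hF
  have hFg : ∀ n : ℕ, ∀ t ∈ Set.Ioi (0:ℝ), F n t = Stmt15Aux.gA k σ n t * (-l) ^ n := by
    intro n t ht
    simp only [hF, Stmt15Aux.gA, if_pos (Set.mem_Ioi.mp ht)]
    ring
  have hFint : ∀ n, Integrable (F n) (volume.restrict (Set.Ioi 0)) := by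
    intro n
    have h0 : Integrable (fun t => Stmt15Aux.gA k σ n t * (-l) ^ n)
        (volume.restrict (Set.Ioi 0)) := ((hkey n).1.mul_const _).integrableOn
    exact h0.congr (by
      filter_upwards [ae_restrict_mem measurableSet_Ioi] with t ht using (hFg n t ht).symm)
  have hFmeas : ∀ n, AEStronglyMeasurable (F n) (volume.restrict (Set.Ioi 0)) :=
    fun n => (hFint n).aestronglyMeasurable
  have hFnorm : ∀ n, (∫ t, ‖F n t‖ ∂(volume.restrict (Set.Ioi 0))) ≤ σ⁻¹ * (l * Na) ^ n := by
    intro n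
    have e1 : (∫ t, ‖F n t‖ ∂(volume.restrict (Set.Ioi 0))) =
        ∫ t, ‖Stmt15Aux.gA k σ n t‖ * l ^ n ∂(volume.restrict (Set.Ioi 0)) := by
      refine integral_congr_ae ?_
      filter_upwards [ae_restrict_mem measurableSet_Ioi] with t ht
      rw [hFg n t ht, norm_mul, norm_pow, norm_neg]
      simp [Real.norm_eq_abs, abs_of_nonneg hl]
    have e2 : (∫ t, ‖Stmt15Aux.gA k σ n t‖ * l ^ n ∂(volume.restrict (Set.Ioi 0))) =
        (∫ t, ‖Stmt15Aux.gA k σ n t‖ ∂(volume.restrict (Set.Ioi 0))) * l ^ n :=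
      integral_mul_const _ _
    have e3 : (∫ t, ‖Stmt15Aux.gA k σ n t‖ ∂(volume.restrict (Set.Ioi 0))) ≤
        ∫ t, ‖Stmt15Aux.gA k σ n t‖ :=
      setIntegral_le_integral (hkey n).1.norm (Filter.Eventually.of_forall fun t => norm_nonneg _)
    calc (∫ t, ‖F n t‖ ∂(volume.restrict (Set.Ioi 0)))
        = (∫ t, ‖Stmt15Aux.gA k σ n t‖ ∂(volume.restrict (Set.Ioi 0))) * l ^ n := by
          rw [e1, e2]
      _ ≤ ((1 / σ) * Na ^ n) * l ^ n := by
          refine mul_le_mul_of_nonneg_right (le_trans e3 ?_) (pow_nonneg hl n)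
          exact (hkey n).2.2
      _ = σ⁻¹ * (l * Na) ^ n := by rw [mul_pow]; ring
  have hsum : (∑' n, ∫⁻ t, ‖F n t‖₊ ∂(volume.restrict (Set.Ioi 0))) ≠ ⊤ := by
    have hle : (∑' n, ∫⁻ t, ‖F n t‖₊ ∂(volume.restrict (Set.Ioi 0))) ≤
        ∑' n : ℕ, ENNReal.ofReal σ⁻¹ * ENNReal.ofReal (l * Na) ^ n := by
      refine ENNReal.tsum_le_tsum fun n => ?_
      rw [show (∫⁻ t, (‖F n t‖₊ : ENNReal) ∂(volume.restrict (Set.Ioi 0))) = ∫⁻ t, ‖F n t‖ₑ ∂(volume.restrict (Set.Ioi 0)) from rfl, ← ofReal_integral_norm_eq_lintegral_enorm (hFint n)]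
      calc ENNReal.ofReal (∫ t, ‖F n t‖ ∂(volume.restrict (Set.Ioi 0)))
          ≤ ENNReal.ofReal (σ⁻¹ * (l * Na) ^ n) := ENNReal.ofReal_le_ofReal (hFnorm n)
        _ = ENNReal.ofReal σ⁻¹ * ENNReal.ofReal (l * Na) ^ n := by
            rw [ENNReal.ofReal_mul (by positivity), ENNReal.ofReal_pow hq0]
    have hgeom : (∑' n : ℕ, ENNReal.ofReal σ⁻¹ * ENNReal.ofReal (l * Na) ^ n) =
        ENNReal.ofReal σ⁻¹ * (1 - ENNReal.ofReal (l * Na))⁻¹ := by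
      rw [ENNReal.tsum_mul_left, ENNReal.tsum_geometric]
    refine ne_top_of_le_ne_top ?_ hle
    rw [hgeom]
    refine ENNReal.mul_ne_top ENNReal.ofReal_ne_top (ENNReal.inv_ne_top.mpr ?_)
    exact (tsub_pos_of_lt (ENNReal.ofReal_lt_one.mpr hq)).ne'
  have hFtsum : ∀ t, Real.exp (-(σ * t)) * PhiR k t (-l) = ∑' n, F n t := by
    intro t
    rw [PhiR]
    exact (tsum_mul_left).symm
  have hae : ∀ᵐ t ∂(volume.restrict (Set.Ioi 0)), Summable fun n => F n t := by
    have h1 : (∫⁻ t, (∑' n, (‖F n t‖₊ : ENNReal)) ∂(volume.restrict (Set.Ioi 0))) ≠ ⊤ := by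
      rw [lintegral_tsum fun n => (hFmeas n).aemeasurable.nnnorm.coe_nnreal_ennreal]
      exact hsum
    have h2 := ae_lt_top' (AEMeasurable.ennreal_tsum fun n => (hFmeas n).aemeasurable.nnnorm.coe_nnreal_ennreal) h1
    filter_upwards [h2] with t ht
    have h3 : Summable fun n => ‖F n t‖₊ := ENNReal.tsum_coe_ne_top_iff_summable.mp ht.ne
    have h4 : Summable fun n => ‖F n t‖ := by
      have := NNReal.summable_coe.mpr h3
      simpa [coe_nnnorm] using this
    exact h4.of_norm
  have hptw : ∀ t, (‖Real.exp (-(σ * t)) * PhiR k t (-l)‖₊ : ENNReal) ≤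
      ∑' n, (‖F n t‖₊ : ENNReal) := by
    intro t
    by_cases hsum' : Summable fun n => ‖F n t‖₊
    · rw [hFtsum t]
      calc (‖∑' n, F n t‖₊ : ENNReal) ≤ ((∑' n, ‖F n t‖₊ : NNReal) : ENNReal) :=
            ENNReal.coe_le_coe.mpr (nnnorm_tsum_le hsum')
        _ = ∑' n, (‖F n t‖₊ : ENNReal) := ENNReal.coe_tsum hsum'
    · have : (∑' n, (‖F n t‖₊ : ENNReal)) = ⊤ := by
        by_contra h
        exact hsum' (ENNReal.tsum_coe_ne_top_iff_summable.mp h)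
      rw [this]
      exact le_top
  have hAESM : AEStronglyMeasurable (fun t => Real.exp (-(σ * t)) * PhiR k t (-l))
      (volume.restrict (Set.Ioi 0)) := by
    refine aestronglyMeasurable_of_tendsto_ae atTop
      (f := fun N t => ∑ n ∈ Finset.range N, F n t)
      (fun N => Finset.aestronglyMeasurable_fun_sum _ fun n _ => hFmeas n) ?_
    filter_upwards [hae] with t ht
    rw [hFtsum t]
    exact ht.hasSum.tendsto_sum_nat
  have hIntF : Integrable (fun t => Real.exp (-(σ * t)) * PhiR k t (-l))
      (volume.restrict (Set.Ioi 0)) := by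
    refine ⟨hAESM, ?_⟩
    refine lt_of_le_of_lt (lintegral_mono hptw) ?_
    rw [lintegral_tsum fun n => (hFmeas n).aemeasurable.nnnorm.coe_nnreal_ennreal]
    exact hsum.lt_top
  refine ⟨hIntF, ?_⟩
  set L : ℝ := ∫ t in Set.Ioi (0:ℝ), Real.exp (-(σ * t)) * K t with hLdef
  have efa : (∫ t, Stmt15Aux.fA K σ t) = L := by
    rw [Stmt15Aux.fA_eq_indicator, integral_indicator measurableSet_Ioi]
  have hLabs : |l * L| < 1 := by
    have h1 : |L| ≤ Na := by
      rw [hNadef, ← efa]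
      simpa [Real.norm_eq_abs] using norm_integral_le_integral_norm (fun t => Stmt15Aux.fA K σ t)
    calc |l * L| = l * |L| := by rw [abs_mul, abs_of_nonneg hl]
      _ ≤ l * Na := mul_le_mul_of_nonneg_left h1 hl
      _ < 1 := hq
  have hFval : ∀ n : ℕ, (∫ t, F n t ∂(volume.restrict (Set.Ioi 0))) =
      (1 / σ) * (-(l * L)) ^ n := by
    intro n
    have e1 : (∫ t, F n t ∂(volume.restrict (Set.Ioi 0))) =
        (∫ t in Set.Ioi (0:ℝ), Real.exp (-(σ * t)) * coeff k n t) * (-l) ^ n := by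
      rw [← integral_mul_const]
      refine integral_congr_ae (Filter.Eventually.of_forall fun t => ?_)
      simp only [hF]
      ring
    rw [e1, (part1 n σ hσγ).2, ← hLdef]
    rw [show (-(l * L)) ^ n = (-l) ^ n * L ^ n by rw [← mul_pow]; ring_nf]
    ring
  calc (∫ t in Set.Ioi (0:ℝ), Real.exp (-(σ * t)) * PhiR k t (-l))
      = ∫ t, (∑' n, F n t) ∂(volume.restrict (Set.Ioi 0)) := by
        refine integral_congr_ae (Filter.Eventually.of_forall fun t => hFtsum t)
    _ = ∑' n, ∫ t, F n t ∂(volume.restrict (Set.Ioi 0)) := integral_tsum hFmeas hsum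
    _ = ∑' n : ℕ, (1 / σ) * (-(l * L)) ^ n := tsum_congr hFval
    _ = (1 / σ) * ∑' n : ℕ, (-(l * L)) ^ n := tsum_mul_left
    _ = (1 / σ) * (1 - -(l * L))⁻¹ := by
        rw [tsum_geometric_of_abs_lt_one (by rwa [abs_neg])]
    _ = (1 / σ) * (1 / (1 + l * L)) := by rw [sub_neg_eq_add]; ring
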